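/- Under a κ-Poincaré inequality for the conditionals μ(x_⊥|x_r) and with the subspace X_r spanned by the d_r leading eigenvectors of H_1 = ∫∇log f ∇log f^T π dx, the Hellinger distance between the target π = fμ/Z and the marginal-likelihood approximation φ_f satisfies D_H(π, φ_f) ≤ (1/2)·sqrt(κ·R(X_r,H_1)), where R(X_r,H_1) = tr(P_⊥ H_1 P_⊥) = Σ_{i>d_r} λ_i(H_1). -/

import Mathlib

open MeasureTheory

/-- Squared Euclidean norm of the (full) gradient of `h : ℝ^n × ℝ^m → ℝ`. -/
noncomputable def gradSq {n m : ℕ} (h : (Fin n → ℝ) × (Fin m → ℝ) → ℝ)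
    (x : (Fin n → ℝ) × (Fin m → ℝ)) : ℝ :=
  (∑ i, (fderiv ℝ h x (Pi.single i 1, 0)) ^ 2) +
    ∑ j, (fderiv ℝ h x (0, Pi.single j 1)) ^ 2

/-- Squared Euclidean norm of the gradient of `h` in the complement directions. -/
noncomputable def gradSqPerp {n m : ℕ} (h : (Fin n → ℝ) × (Fin m → ℝ) → ℝ)
    (x : (Fin n → ℝ) × (Fin m → ℝ)) : ℝ :=
  ∑ j, (fderiv ℝ h x (0, Pi.single j 1)) ^ 2

lemma sqrt_contdiff {n m : ℕ} (f : (Fin n → ℝ) × (Fin m → ℝ) → ℝ) (hf0 : ∀ x, 0 < f x)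
    (hfsmooth : ContDiff ℝ 1 f) (xr : Fin n → ℝ) :
    ContDiff ℝ 1 (fun z : (Fin n → ℝ) × (Fin m → ℝ) => Real.sqrt (f (xr, z.2))) := by
  rw [contDiff_iff_contDiffAt]
  intro x
  exact (Real.contDiffAt_sqrt (hf0 (xr, x.2)).ne').comp x
    (hfsmooth.contDiffAt.comp x ((contDiff_const.prodMk contDiff_snd).contDiffAt))

lemma sqrt_grad_eq {n m : ℕ} (f : (Fin n → ℝ) × (Fin m → ℝ) → ℝ) (hf0 : ∀ x, 0 < f x)
    (hfsmooth : ContDiff ℝ 1 f) (xr : Fin n → ℝ) (y : Fin m → ℝ) :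
    gradSq (fun x => Real.sqrt (f (xr, x.2))) (xr, y)
      = f (xr, y) / 4 * gradSqPerp (fun z => Real.log (f z)) (xr, y) := by
  have hfx : f (xr, y) ≠ 0 := (hf0 (xr, y)).ne'
  have hdf : HasFDerivAt f (fderiv ℝ f (xr, y)) (xr, y) :=
    (hfsmooth.differentiable one_ne_zero (xr, y)).hasFDerivAt
  have hp : HasFDerivAt (fun z : (Fin n → ℝ) × (Fin m → ℝ) => (xr, z.2))
      ((ContinuousLinearMap.inr ℝ (Fin n → ℝ) (Fin m → ℝ)).comp
        (ContinuousLinearMap.snd ℝ (Fin n → ℝ) (Fin m → ℝ))) (xr, y) :=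
    (hasFDerivAt_prodMk_right xr y).comp (xr, y) hasFDerivAt_snd
  have hcomp : HasFDerivAt (fun z : (Fin n → ℝ) × (Fin m → ℝ) => f (xr, z.2))
      ((fderiv ℝ f (xr, y)).comp ((ContinuousLinearMap.inr ℝ (Fin n → ℝ) (Fin m → ℝ)).comp
        (ContinuousLinearMap.snd ℝ (Fin n → ℝ) (Fin m → ℝ)))) (xr, y) :=
    hdf.comp (xr, y) hp
  have hh : HasFDerivAt (fun z : (Fin n → ℝ) × (Fin m → ℝ) => Real.sqrt (f (xr, z.2)))
      ((1 / (2 * Real.sqrt (f (xr, y)))) •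
        ((fderiv ℝ f (xr, y)).comp ((ContinuousLinearMap.inr ℝ (Fin n → ℝ) (Fin m → ℝ)).comp
          (ContinuousLinearMap.snd ℝ (Fin n → ℝ) (Fin m → ℝ))))) (xr, y) :=
    hcomp.sqrt hfx
  have hL : HasFDerivAt (fun z => Real.log (f z)) ((f (xr, y))⁻¹ • fderiv ℝ f (xr, y)) (xr, y) :=
    hdf.log hfx
  rw [gradSq, gradSqPerp, hh.fderiv, hL.fderiv]
  simp only [ContinuousLinearMap.coe_smul', Pi.smul_apply, ContinuousLinearMap.coe_comp',
    Function.comp_apply, ContinuousLinearMap.coe_snd', ContinuousLinearMap.inr_apply, Prod.snd,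
    smul_eq_mul, map_zero, mul_zero, ne_eq, OfNat.ofNat_ne_zero, not_false_eq_true,
    zero_pow, Finset.sum_const_zero, zero_add]
  rw [Finset.mul_sum]
  refine Finset.sum_congr rfl fun j _ => ?_
  have h4 : Real.sqrt (f (xr, y)) ^ 2 = f (xr, y) := Real.sq_sqrt (hf0 _).le
  have hs0 : Real.sqrt (f (xr, y)) ≠ 0 := ne_of_gt (Real.sqrt_pos.mpr (hf0 _))
  field_simp
  linear_combination (-(4 * (fderiv ℝ f (xr, y) (0, Pi.single j 1)) ^ 2)) * h4

lemma inner_bound {n m : ℕ}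
    (μ f : (Fin n → ℝ) × (Fin m → ℝ) → ℝ)
    (hμ0 : ∀ x, 0 ≤ μ x) (hf0 : ∀ x, 0 < f x)
    (hfsmooth : ContDiff ℝ 1 f)
    (κ : ℝ) (hκ : 0 ≤ κ)
    (μbar : (Fin n → ℝ) → ℝ)
    (hμbar : ∀ xr, μbar xr = ∫ y, μ (xr, y)) (hμbar0 : ∀ xr, 0 < μbar xr)
    (fbar : (Fin n → ℝ) → ℝ)
    (hfbar : ∀ xr, fbar xr = ∫ y, f (xr, y) * (μ (xr, y) / μbar xr))
    (hPoin : ∀ xr, ∀ h : (Fin n → ℝ) × (Fin m → ℝ) → ℝ, ContDiff ℝ 1 h →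
      (∫ y, (h (xr, y)) ^ 2 * (μ (xr, y) / μbar xr)) -
          (∫ y, h (xr, y) * (μ (xr, y) / μbar xr)) ^ 2 ≤
        κ * ∫ y, gradSq h (xr, y) * (μ (xr, y) / μbar xr))
    (xr : Fin n → ℝ)
    (hInt : Integrable (fun y => f (xr, y) * μ (xr, y))) :
    ∫ y, (Real.sqrt (f (xr, y)) - Real.sqrt (fbar xr)) ^ 2 * μ (xr, y)
      ≤ (κ / 2) * ∫ y, gradSqPerp (fun z => Real.log (f z)) (xr, y)
          * (f (xr, y) * μ (xr, y)) := by
  have hb : 0 < μbar xr := hμbar0 xr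
  -- integrability of the slice of μ
  have Int_μ : Integrable (fun y => μ (xr, y)) := by
    by_contra hc
    have h0 : ∫ y, μ (xr, y) = 0 := integral_undef hc
    have := hμbar xr
    rw [h0] at this
    exact absurd this (ne_of_gt hb)
  have cont_f : Continuous (fun y : Fin m → ℝ => f (xr, y)) :=
    hfsmooth.continuous.comp (Continuous.prodMk_right xr)
  have cont_sf : Continuous (fun y : Fin m → ℝ => Real.sqrt (f (xr, y))) :=
    Real.continuous_sqrt.comp cont_f
  have Int_sfμ : Integrable (fun y => Real.sqrt (f (xr, y)) * μ (xr, y)) := by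
    refine Integrable.mono' (Int_μ.add hInt)
      (cont_sf.aestronglyMeasurable.mul Int_μ.aestronglyMeasurable)
      (Filter.Eventually.of_forall fun y => ?_)
    have hle : Real.sqrt (f (xr, y)) ≤ 1 + f (xr, y) := by
      nlinarith [sq_nonneg (Real.sqrt (f (xr, y)) - 1), Real.sq_sqrt (hf0 (xr, y)).le,
        Real.sqrt_nonneg (f (xr, y))]
    have : ‖Real.sqrt (f (xr, y)) * μ (xr, y)‖ = Real.sqrt (f (xr, y)) * μ (xr, y) :=
      abs_of_nonneg (mul_nonneg (Real.sqrt_nonneg _) (hμ0 _))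
    rw [this]
    have := mul_le_mul_of_nonneg_right hle (hμ0 (xr, y))
    simp only [Pi.add_apply]
    linarith
  -- ν-form integrability
  have Int_ν : Integrable (fun y => μ (xr, y) / μbar xr) := Int_μ.div_const _
  have Int_fν : Integrable (fun y => f (xr, y) * (μ (xr, y) / μbar xr)) := by
    simpa [mul_div_assoc] using hInt.div_const (μbar xr)
  have Int_sfν : Integrable (fun y => Real.sqrt (f (xr, y)) * (μ (xr, y) / μbar xr)) := by
    simpa [mul_div_assoc] using Int_sfμ.div_const (μbar xr)
  have hν1 : ∫ y, μ (xr, y) / μbar xr = 1 := by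
    rw [integral_div, ← hμbar xr, div_self (ne_of_gt hb)]
  set S := ∫ y, Real.sqrt (f (xr, y)) * (μ (xr, y) / μbar xr) with hSdef
  have hS0 : 0 ≤ S := integral_nonneg fun y =>
    mul_nonneg (Real.sqrt_nonneg _) (div_nonneg (hμ0 _) hb.le)
  have hfbar' : fbar xr = ∫ y, f (xr, y) * (μ (xr, y) / μbar xr) := hfbar xr
  have hfbar0 : 0 ≤ fbar xr := by
    rw [hfbar']
    exact integral_nonneg fun y => mul_nonneg (hf0 _).le (div_nonneg (hμ0 _) hb.le)
  -- variance nonnegativity : S ^ 2 ≤ fbar xr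
  have hVar : S ^ 2 ≤ fbar xr := by
    have h0 : 0 ≤ ∫ y, (Real.sqrt (f (xr, y)) - S) ^ 2 * (μ (xr, y) / μbar xr) :=
      integral_nonneg fun y => mul_nonneg (sq_nonneg _) (div_nonneg (hμ0 _) hb.le)
    have hexp : ∀ y : Fin m → ℝ, (Real.sqrt (f (xr, y)) - S) ^ 2 * (μ (xr, y) / μbar xr)
        = f (xr, y) * (μ (xr, y) / μbar xr)
          - 2 * S * (Real.sqrt (f (xr, y)) * (μ (xr, y) / μbar xr))
          + S ^ 2 * (μ (xr, y) / μbar xr) := fun y => by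
      have h4 : Real.sqrt (f (xr, y)) ^ 2 = f (xr, y) := Real.sq_sqrt (hf0 _).le
      linear_combination (μ (xr, y) / μbar xr) * h4
    have i1 : Integrable (fun y => f (xr, y) * (μ (xr, y) / μbar xr)
        - 2 * S * (Real.sqrt (f (xr, y)) * (μ (xr, y) / μbar xr))) :=
      Int_fν.sub (Int_sfν.const_mul _)
    have i2 : Integrable (fun y => S ^ 2 * (μ (xr, y) / μbar xr)) := Int_ν.const_mul _
    have i3 : Integrable (fun y => 2 * S * (Real.sqrt (f (xr, y)) * (μ (xr, y) / μbar xr))) :=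
      Int_sfν.const_mul _
    rw [integral_congr_ae (Filter.Eventually.of_forall hexp), integral_add i1 i2,
      integral_sub Int_fν i3,
      integral_const_mul, integral_const_mul, hν1, ← hSdef, ← hfbar'] at h0
    nlinarith
  have hSle : S ≤ Real.sqrt (fbar xr) := Real.le_sqrt_of_sq_le hVar
  -- Poincaré inequality applied to h = sqrt ∘ f (frozen xr)
  have hp := hPoin xr (fun x => Real.sqrt (f (xr, x.2)))
    (sqrt_contdiff f hf0 hfsmooth xr)
  simp only [] at hp
  have hsq : ∀ y : Fin m → ℝ, Real.sqrt (f (xr, y)) ^ 2 * (μ (xr, y) / μbar xr)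
      = f (xr, y) * (μ (xr, y) / μbar xr) := fun y => by
    rw [Real.sq_sqrt (hf0 _).le]
  rw [integral_congr_ae (Filter.Eventually.of_forall hsq), ← hfbar', ← hSdef] at hp
  have hgr : ∀ y : Fin m → ℝ,
      gradSq (fun x => Real.sqrt (f (xr, x.2))) (xr, y) * (μ (xr, y) / μbar xr)
      = gradSqPerp (fun z => Real.log (f z)) (xr, y) * (f (xr, y) * μ (xr, y))
        / (4 * μbar xr) := fun y => by
    rw [sqrt_grad_eq f hf0 hfsmooth xr y]
    field_simp
  rw [integral_congr_ae (Filter.Eventually.of_forall hgr), integral_div] at hp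
  -- expand the LHS
  set c := Real.sqrt (fbar xr) with hcdef
  have hc2 : c ^ 2 = fbar xr := Real.sq_sqrt hfbar0
  have hexp2 : ∀ y : Fin m → ℝ, (Real.sqrt (f (xr, y)) - c) ^ 2 * μ (xr, y)
      = f (xr, y) * μ (xr, y)
        - 2 * c * (Real.sqrt (f (xr, y)) * μ (xr, y))
        + fbar xr * μ (xr, y) := fun y => by
    have h4 : Real.sqrt (f (xr, y)) ^ 2 = f (xr, y) := Real.sq_sqrt (hf0 _).le
    linear_combination μ (xr, y) * h4 + μ (xr, y) * hc2
  have j1 : Integrable (fun y => f (xr, y) * μ (xr, y)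
      - 2 * c * (Real.sqrt (f (xr, y)) * μ (xr, y))) := hInt.sub (Int_sfμ.const_mul _)
  have j2 : Integrable (fun y => fbar xr * μ (xr, y)) := Int_μ.const_mul _
  have j3 : Integrable (fun y => 2 * c * (Real.sqrt (f (xr, y)) * μ (xr, y))) :=
    Int_sfμ.const_mul _
  rw [integral_congr_ae (Filter.Eventually.of_forall hexp2), integral_add j1 j2,
    integral_sub hInt j3, integral_const_mul, integral_const_mul, ← hμbar xr]
  -- relate μ-integrals to ν-integrals
  have hfb : ∫ y, f (xr, y) * μ (xr, y) = fbar xr * μbar xr := by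
    rw [hfbar']
    have : ∀ y : Fin m → ℝ, f (xr, y) * (μ (xr, y) / μbar xr)
        = (f (xr, y) * μ (xr, y)) / μbar xr := fun y => by ring
    rw [integral_congr_ae (Filter.Eventually.of_forall this), integral_div]
    field_simp
  have hsb : ∫ y, Real.sqrt (f (xr, y)) * μ (xr, y) = S * μbar xr := by
    rw [hSdef]
    have : ∀ y : Fin m → ℝ, Real.sqrt (f (xr, y)) * (μ (xr, y) / μbar xr)
        = (Real.sqrt (f (xr, y)) * μ (xr, y)) / μbar xr := fun y => by ring
    rw [integral_congr_ae (Filter.Eventually.of_forall this), integral_div]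
    field_simp
  rw [hfb, hsb]
  -- final arithmetic
  set X := ∫ y, gradSqPerp (fun z => Real.log (f z)) (xr, y) * (f (xr, y) * μ (xr, y)) with hXdef
  have hp' : (fbar xr - S ^ 2) * (4 * μbar xr) ≤ κ * X := by
    have h4b : (0:ℝ) < 4 * μbar xr := by linarith
    rw [mul_div_assoc'] at hp
    calc (fbar xr - S ^ 2) * (4 * μbar xr)
        ≤ (κ * X / (4 * μbar xr)) * (4 * μbar xr) := by
          exact mul_le_mul_of_nonneg_right hp h4b.le
      _ = κ * X := by field_simp
  have hS2 : S ^ 2 ≤ c * S := by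
    have := mul_le_mul_of_nonneg_right hSle hS0
    nlinarith
  nlinarith [hp', hS2, hb]

/-- Under a κ-Poincaré inequality for the conditionals `μ(x_⊥|x_r)`,
with the likelihood-informed subspace given by the `x_r` coordinates, the Hellinger
distance between `π = fμ/Z` and the marginal-likelihood approximation `φ_f` is
bounded by `(1/2)·sqrt(κ·R)`, where `R = tr(P_⊥ H_1 P_⊥) = ∫ ‖∇_⊥ log f‖² π dx`. -/
theorem stmt_14 {n m : ℕ}
    (μ f : (Fin n → ℝ) × (Fin m → ℝ) → ℝ)
    (hμ0 : ∀ x, 0 ≤ μ x) (hf0 : ∀ x, 0 < f x)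
    (hfsmooth : ContDiff ℝ 1 f)
    (hμ1 : ∫ x, μ x = 1)
    (κ : ℝ) (hκ : 0 ≤ κ)
    (Z : ℝ) (hZ : Z = ∫ x, f x * μ x) (hZ0 : 0 < Z)
    (μbar : (Fin n → ℝ) → ℝ)
    (hμbar : ∀ xr, μbar xr = ∫ y, μ (xr, y)) (hμbar0 : ∀ xr, 0 < μbar xr)
    (fbar : (Fin n → ℝ) → ℝ)
    (hfbar : ∀ xr, fbar xr = ∫ y, f (xr, y) * (μ (xr, y) / μbar xr))
    (hPoin : ∀ xr, ∀ h : (Fin n → ℝ) × (Fin m → ℝ) → ℝ, ContDiff ℝ 1 h →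
      (∫ y, (h (xr, y)) ^ 2 * (μ (xr, y) / μbar xr)) -
          (∫ y, h (xr, y) * (μ (xr, y) / μbar xr)) ^ 2 ≤
        κ * ∫ y, gradSq h (xr, y) * (μ (xr, y) / μbar xr))
    (hfint : Integrable (fun x => f x * μ x))
    (hHint : Integrable
      (fun x => (Real.sqrt (f x * μ x / Z) - Real.sqrt (fbar x.1 * μ x / Z)) ^ 2))
    (hRint : Integrable
      (fun x => gradSqPerp (fun z => Real.log (f z)) x * (f x * μ x / Z))) :
    Real.sqrt ((1 / 2) *
        ∫ x, (Real.sqrt (f x * μ x / Z) - Real.sqrt (fbar x.1 * μ x / Z)) ^ 2) ≤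
      (1 / 2) * Real.sqrt (κ *
        ∫ x, gradSqPerp (fun z => Real.log (f z)) x * (f x * μ x / Z)) := by
  have hfbar0 : ∀ xr, 0 ≤ fbar xr := fun xr => by
    rw [hfbar xr]
    exact integral_nonneg fun y => mul_nonneg (hf0 _).le (div_nonneg (hμ0 _) (hμbar0 xr).le)
  have KEY : (∫ x, (Real.sqrt (f x * μ x / Z) - Real.sqrt (fbar x.1 * μ x / Z)) ^ 2)
      ≤ (κ / 2) * ∫ x, gradSqPerp (fun z => Real.log (f z)) x * (f x * μ x / Z) := by
    rw [Measure.volume_eq_prod] at hHint hRint hfint ⊢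
    rw [integral_prod _ hHint, integral_prod _ hRint, ← integral_const_mul]
    refine integral_mono_ae hHint.integral_prod_left
      (hRint.integral_prod_left.const_mul _) ?_
    filter_upwards [hfint.prod_right_ae] with xr hslice
    have hpt : ∀ y : Fin m → ℝ,
        (Real.sqrt (f (xr, y) * μ (xr, y) / Z)
          - Real.sqrt (fbar (xr, y).1 * μ (xr, y) / Z)) ^ 2
        = ((Real.sqrt (f (xr, y)) - Real.sqrt (fbar xr)) ^ 2 * μ (xr, y)) / Z := fun y => by
      have h1 : f (xr, y) * μ (xr, y) / Z = f (xr, y) * (μ (xr, y) / Z) := by ring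
      have h2 : fbar (xr, y).1 * μ (xr, y) / Z = fbar xr * (μ (xr, y) / Z) := by ring
      rw [h1, h2, Real.sqrt_mul (hf0 _).le, Real.sqrt_mul (hfbar0 xr), ← sub_mul, mul_pow,
        Real.sq_sqrt (div_nonneg (hμ0 _) hZ0.le)]
      ring
    have hpt2 : ∀ y : Fin m → ℝ,
        gradSqPerp (fun z => Real.log (f z)) (xr, y) * (f (xr, y) * μ (xr, y) / Z)
        = (gradSqPerp (fun z => Real.log (f z)) (xr, y) * (f (xr, y) * μ (xr, y))) / Z :=
      fun y => by ring
    rw [integral_congr_ae (Filter.Eventually.of_forall hpt), integral_div,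
      integral_congr_ae (Filter.Eventually.of_forall hpt2), integral_div, mul_div_assoc']
    have hinner := inner_bound μ f hμ0 hf0 hfsmooth κ hκ μbar hμbar hμbar0 fbar hfbar
      hPoin xr hslice
    gcongr
  have h1 : (1 / 2 : ℝ) *
      (∫ x, (Real.sqrt (f x * μ x / Z) - Real.sqrt (fbar x.1 * μ x / Z)) ^ 2)
      ≤ (1 / 4) * (κ * ∫ x, gradSqPerp (fun z => Real.log (f z)) x * (f x * μ x / Z)) := by
    have h2 := KEY
    nlinarith [h2]
  calc Real.sqrt ((1 / 2) *
        ∫ x, (Real.sqrt (f x * μ x / Z) - Real.sqrt (fbar x.1 * μ x / Z)) ^ 2)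
      ≤ Real.sqrt ((1 / 4) *
        (κ * ∫ x, gradSqPerp (fun z => Real.log (f z)) x * (f x * μ x / Z))) :=
        Real.sqrt_le_sqrt h1
    _ = (1 / 2) * Real.sqrt (κ *
        ∫ x, gradSqPerp (fun z => Real.log (f z)) x * (f x * μ x / Z)) := by
        rw [show (1 / 4 : ℝ) = (1 / 2) ^ 2 by norm_num, Real.sqrt_mul (by positivity),
          Real.sqrt_sq (by norm_num)]
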